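/- arXiv:1203.6430 — 2 statements merged into one kernel-verified Lean document; each statement's English description precedes it below -/
import Mathlib

section
/- Let S be an automorphism of a probability space (X, μ), let n ≥ 2, and let E be a measurable set such that E, SE, …, S^{n−1}E are pairwise disjoint. Let A_1, …, A_j be measurable sets and let 0 ≤ a < ε be such that for each i there is a union B_i of some of the sets SˡE (0 ≤ l ≤ n−1) with μ(A_i Δ B_i) ≤ a. Set b = (ε − a)/(2n²). Then every automorphism V of (X, μ) satisfying |μ(Vᵐ(SⁱE) ∩ SʲE) − μ(Sᵐ(SⁱE) ∩ SʲE)| < b for all m ∈ ℤ and all 0 ≤ i, j ≤ n−1 admits a measurable set Ẽ such that Ẽ, VẼ, …, V^{n−1}Ẽ are pairwise disjoint and, for each i, some union of the sets VˡẼ (0 ≤ l ≤ n−1) differs from A_i by a set of measure less than ε. (This is the key estimate showing that the set R(j, k) of mixings possessing a Rokhlin tower approximating A_1, …, A_j with accuracy better than 1/k is open in the leash topology.) -/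
open MeasureTheory Filter Set
open scoped symmDiff

variable {X : Type*} [MeasurableSpace X]

/-- `n`-th iterate of a measurable equivalence, `n : ℕ`. -/
def mnpow (T : X ≃ᵐ X) : ℕ → X ≃ᵐ X
  | 0 => MeasurableEquiv.refl X
  | n + 1 => (mnpow T n).trans T

/-- `n`-th iterate of a measurable equivalence, `n : ℤ`; negative powers are
iterates of the inverse. -/
def mzpow (T : X ≃ᵐ X) : ℤ → X ≃ᵐ X
  | Int.ofNat n => mnpow T n
  | Int.negSucc n => mnpow T.symm (n + 1)

/-- An automorphism `T` of `(X, μ)` is mixing if `μ (Tⁿ A ∩ B) → μ A * μ B` as `n → ∞`. -/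
def Mixing (μ : Measure X) (T : X ≃ᵐ X) : Prop :=
  ∀ A B : Set X, MeasurableSet A → MeasurableSet B →
    Tendsto (fun n : ℕ => μ (mnpow T n '' A ∩ B)) atTop (nhds (μ A * μ B))

/- ### Auxiliary lemmas -/

lemma mnpow_apply (T : X ≃ᵐ X) : ∀ (m : ℕ) (x : X), mnpow T m x = T^[m] x
  | 0, _ => rfl
  | m + 1, x => by
      show T (mnpow T m x) = T^[m + 1] x
      rw [mnpow_apply T m x, Function.iterate_succ_apply']

lemma mzpow_natCast (T : X ≃ᵐ X) (m : ℕ) : mzpow T (m : ℤ) = mnpow T m := rfl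

lemma mnpow_zero_image (T : X ≃ᵐ X) (E : Set X) : mnpow T 0 '' E = E := by
  show (MeasurableEquiv.refl X) '' E = E
  simp

lemma mnpow_mp {μ : Measure X} {V : X ≃ᵐ X} (hV : MeasurePreserving V μ μ) (m : ℕ) :
    MeasurePreserving (mnpow V m) μ μ := by
  induction m with
  | zero => exact MeasurePreserving.id μ
  | succ m ih => exact hV.comp ih

lemma measure_mnpow_image {μ : Measure X} {V : X ≃ᵐ X} (hV : MeasurePreserving V μ μ)
    (m : ℕ) {A : Set X} (hA : MeasurableSet A) : μ (mnpow V m '' A) = μ A := by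
  rw [MeasurableEquiv.image_eq_preimage_symm]
  exact ((mnpow_mp hV m).symm (mnpow V m)).measure_preimage hA.nullMeasurableSet

lemma toReal_measure_mono {μ : Measure X} [IsFiniteMeasure μ] {A B : Set X} (h : A ⊆ B) :
    (μ A).toReal ≤ (μ B).toReal :=
  ENNReal.toReal_mono (measure_ne_top μ B) (measure_mono h)

lemma toReal_measure_union_le (μ : Measure X) [IsFiniteMeasure μ] (A B : Set X) :
    (μ (A ∪ B)).toReal ≤ (μ A).toReal + (μ B).toReal := by
  rw [← ENNReal.toReal_add (measure_ne_top μ A) (measure_ne_top μ B)]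
  exact ENNReal.toReal_mono (ENNReal.add_ne_top.mpr ⟨measure_ne_top μ A, measure_ne_top μ B⟩)
    (measure_union_le A B)

lemma toReal_symmDiff_triangle (μ : Measure X) [IsFiniteMeasure μ] (A B C : Set X) :
    (μ (A ∆ C)).toReal ≤ (μ (A ∆ B)).toReal + (μ (B ∆ C)).toReal :=
  le_trans (toReal_measure_mono (symmDiff_triangle A B C)) (toReal_measure_union_le μ _ _)

lemma toReal_measure_diff {μ : Measure X} [IsFiniteMeasure μ] {A B : Set X}
    (hB : MeasurableSet B) (h : B ⊆ A) :
    (μ (A \ B)).toReal = (μ A).toReal - (μ B).toReal := by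
  rw [measure_diff h hB.nullMeasurableSet (measure_ne_top μ B),
    ENNReal.toReal_sub_of_le (measure_mono h) (measure_ne_top μ A)]

lemma toReal_measure_biUnion_le (μ : Measure X) [IsFiniteMeasure μ] (s : Finset ℕ)
    (f : ℕ → Set X) :
    (μ (⋃ i ∈ s, f i)).toReal ≤ ∑ i ∈ s, (μ (f i)).toReal := by
  rw [← ENNReal.toReal_sum (fun i _ => measure_ne_top μ _)]
  exact ENNReal.toReal_mono (by simp [measure_ne_top μ])
    (measure_biUnion_finset_le s f)

omit [MeasurableSpace X] in
lemma biUnion_symmDiff_subset (s : Finset ℕ) (f g : ℕ → Set X) :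
    ((⋃ i ∈ s, f i) ∆ (⋃ i ∈ s, g i)) ⊆ ⋃ i ∈ s, (f i ∆ g i) := by
  intro x hx
  rw [Set.mem_symmDiff] at hx
  rcases hx with ⟨h1, h2⟩ | ⟨h1, h2⟩ <;>
    simp only [Set.mem_iUnion, exists_prop, not_exists, not_and] at h1 h2 ⊢
  · obtain ⟨i, hi, hfi⟩ := h1
    exact ⟨i, hi, Set.mem_symmDiff.mpr (Or.inl ⟨hfi, h2 i hi⟩)⟩
  · obtain ⟨i, hi, hgi⟩ := h1
    exact ⟨i, hi, Set.mem_symmDiff.mpr (Or.inr ⟨hgi, h2 i hi⟩)⟩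

/-- Key estimate in the openness of `R(j, k)`: if `S` has a Rokhlin
tower `E, SE, …, S^{n-1}E` whose level-unions approximate `A_1, …, A_j` within `a < ε`,
and `V` is close enough (within `b = (ε - a)/(2n²)`) to `S` on the levels of the tower
in the leash sense, then `V` has a Rokhlin tower of the same height whose level-unions
approximate each `A_i` within `ε`. -/
theorem tower_approximation_stable
    {X : Type*} [MeasurableSpace X]
    (μ : Measure X) [IsProbabilityMeasure μ]
    (S : X ≃ᵐ X) (hS : MeasurePreserving S μ μ)
    (n : ℕ) (hn : 2 ≤ n)
    (E : Set X) (hE : MeasurableSet E)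
    (hdisj : ∀ i j, i < n → j < n → i ≠ j → Disjoint (mnpow S i '' E) (mnpow S j '' E))
    (j : ℕ) (A : Fin j → Set X) (hA : ∀ i, MeasurableSet (A i))
    (a ε : ℝ) (ha : 0 ≤ a) (haε : a < ε)
    (happrox : ∀ i, ∃ I : Finset ℕ, (∀ l ∈ I, l < n) ∧
      (μ (A i ∆ ⋃ l ∈ I, mnpow S l '' E)).toReal ≤ a)
    (V : X ≃ᵐ X) (hV : MeasurePreserving V μ μ)
    (hVS : ∀ (m : ℤ) (i₁ i₂ : ℕ), i₁ < n → i₂ < n →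
      |(μ (mzpow V m '' (mnpow S i₁ '' E) ∩ mnpow S i₂ '' E)).toReal -
        (μ (mzpow S m '' (mnpow S i₁ '' E) ∩ mnpow S i₂ '' E)).toReal|
        < (ε - a) / (2 * (n : ℝ) ^ 2)) :
    ∃ E' : Set X, MeasurableSet E' ∧
      (∀ i₁ i₂, i₁ < n → i₂ < n → i₁ ≠ i₂ →
        Disjoint (mnpow V i₁ '' E') (mnpow V i₂ '' E')) ∧
      ∀ i, ∃ I : Finset ℕ, (∀ l ∈ I, l < n) ∧
        (μ (A i ∆ ⋃ l ∈ I, mnpow V l '' E')).toReal < ε := by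
  set b : ℝ := (ε - a) / (2 * (n : ℝ) ^ 2) with hb
  have hnR : (2 : ℝ) ≤ (n : ℝ) := by exact_mod_cast hn
  have hbpos : 0 < b := by
    apply div_pos (by linarith) (by positivity)
  -- the new base of the tower
  set F : Set X := E \ ⋃ m ∈ Finset.Ico 1 n, (mnpow V m) ⁻¹' E with hFdef
  have hFm : MeasurableSet F :=
    hE.diff (MeasurableSet.biUnion (Finset.Ico 1 n).countable_toSet
      (fun m _ => (mnpow V m).measurable hE))
  have hFE : F ⊆ E := diff_subset
  -- key consequence of disjointness of the S-tower
  have h0S : mnpow S 0 '' E = E := mnpow_zero_image S E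
  have hSzero : ∀ m : ℕ, 1 ≤ m → m < n → μ (mnpow S m '' E ∩ E) = 0 := by
    intro m h1 hm
    have hd := hdisj m 0 hm (by omega) (by omega)
    rw [h0S] at hd
    rw [Set.disjoint_iff_inter_eq_empty.mp hd, measure_empty]
  -- leash estimate, specialization 1 : μ(VᵐE ∩ E) < b for 1 ≤ m < n
  have key1 : ∀ m : ℕ, 1 ≤ m → m < n →
      (μ (mnpow V m '' E ∩ E)).toReal < b := by
    intro m h1 hm
    have h := hVS (m : ℤ) 0 0 (by omega) (by omega)
    rw [mzpow_natCast, mzpow_natCast, h0S, hSzero m h1 hm] at h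
    simpa [abs_of_nonneg ENNReal.toReal_nonneg] using h
  -- leash estimate, specialization 2 : μ(VˡE ∩ SˡE) > μ E - b for l < n
  have key2 : ∀ l : ℕ, l < n →
      (μ E).toReal - b < (μ (mnpow V l '' E ∩ mnpow S l '' E)).toReal := by
    intro l hl
    have h := hVS (l : ℤ) 0 l (by omega) hl
    rw [mzpow_natCast, mzpow_natCast, h0S, Set.inter_self,
      measure_mnpow_image hS l hE] at h
    have := (abs_lt.mp h).1
    linarith
  -- measure of the removed part
  have hEF : (μ (E \ F)).toReal ≤ ((n : ℝ) - 1) * b := by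
    have hsub : E \ F ⊆ ⋃ m ∈ Finset.Ico 1 n, (E ∩ (mnpow V m) ⁻¹' E) := by
      intro x hx
      obtain ⟨hxE, hxF⟩ := hx
      have hxU : x ∈ ⋃ m ∈ Finset.Ico 1 n, (mnpow V m) ⁻¹' E := by
        by_contra h
        exact hxF ⟨hxE, h⟩
      simp only [Set.mem_iUnion, exists_prop] at hxU ⊢
      obtain ⟨m, hm, hmx⟩ := hxU
      exact ⟨m, hm, hxE, hmx⟩
    have h1 : (μ (E \ F)).toReal ≤
        ∑ m ∈ Finset.Ico 1 n, (μ (E ∩ (mnpow V m) ⁻¹' E)).toReal :=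
      (toReal_measure_mono hsub).trans (toReal_measure_biUnion_le μ _ _)
    have h2 : ∀ m ∈ Finset.Ico 1 n, (μ (E ∩ (mnpow V m) ⁻¹' E)).toReal ≤ b := by
      intro m hm
      rw [Finset.mem_Ico] at hm
      have heq : E ∩ (mnpow V m) ⁻¹' E = (mnpow V m) ⁻¹' (mnpow V m '' E ∩ E) := by
        rw [Set.preimage_inter, Set.preimage_image_eq E (mnpow V m).injective]
      have hmeas : μ (E ∩ (mnpow V m) ⁻¹' E) = μ (mnpow V m '' E ∩ E) := by
        rw [heq]
        exact (mnpow_mp hV m).measure_preimage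
          (((mnpow V m).measurableSet_image.mpr hE).inter hE).nullMeasurableSet
      rw [hmeas]
      exact (key1 m hm.1 hm.2).le
    calc (μ (E \ F)).toReal ≤ ∑ m ∈ Finset.Ico 1 n, (μ (E ∩ (mnpow V m) ⁻¹' E)).toReal := h1
      _ ≤ ∑ _m ∈ Finset.Ico 1 n, b := Finset.sum_le_sum h2
      _ = ((n : ℝ) - 1) * b := by
          rw [Finset.sum_const, Nat.card_Ico, nsmul_eq_mul, Nat.cast_sub (by omega)]
          norm_num
  -- step A : μ(SˡE ∆ VˡE) < 2b
  have stepA : ∀ l : ℕ, l < n →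
      (μ ((mnpow S l '' E) ∆ (mnpow V l '' E))).toReal < 2 * b := by
    intro l hl
    set P := mnpow S l '' E
    set Q := mnpow V l '' E
    have hPm : MeasurableSet P := (mnpow S l).measurableSet_image.mpr hE
    have hQm : MeasurableSet Q := (mnpow V l).measurableSet_image.mpr hE
    have hPQ : P ∆ Q ⊆ (P \ (P ∩ Q)) ∪ (Q \ (P ∩ Q)) := by
      intro x hx
      rw [Set.mem_symmDiff] at hx
      rcases hx with ⟨h1, h2⟩ | ⟨h1, h2⟩
      · exact Or.inl ⟨h1, fun h => h2 h.2⟩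
      · exact Or.inr ⟨h1, fun h => h2 h.1⟩
    have hPE : (μ P).toReal = (μ E).toReal := by rw [measure_mnpow_image hS l hE]
    have hQE : (μ Q).toReal = (μ E).toReal := by rw [measure_mnpow_image hV l hE]
    have hIb : (μ E).toReal - b < (μ (P ∩ Q)).toReal := by
      rw [Set.inter_comm]; exact key2 l hl
    have h1 : (μ (P ∆ Q)).toReal ≤
        (μ (P \ (P ∩ Q))).toReal + (μ (Q \ (P ∩ Q))).toReal :=
      (toReal_measure_mono hPQ).trans (toReal_measure_union_le μ _ _)
    rw [toReal_measure_diff (hPm.inter hQm) Set.inter_subset_left,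
      toReal_measure_diff (hPm.inter hQm) Set.inter_subset_right, hPE, hQE] at h1
    linarith
  -- step C : μ(SˡE ∆ VˡF) < (n+1) b
  have stepC : ∀ l : ℕ, l < n →
      (μ ((mnpow S l '' E) ∆ (mnpow V l '' F))).toReal < ((n : ℝ) + 1) * b := by
    intro l hl
    have hB : (μ ((mnpow V l '' E) ∆ (mnpow V l '' F))).toReal ≤ ((n : ℝ) - 1) * b := by
      rw [← Set.image_symmDiff (mnpow V l).injective,
        measure_mnpow_image hV l (hE.symmDiff hFm), symmDiff_of_ge hFE]
      exact hEF
    have htri := toReal_symmDiff_triangle μ (mnpow S l '' E) (mnpow V l '' E) (mnpow V l '' F)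
    have hA' := stepA l hl
    linarith
  refine ⟨F, hFm, ?_, ?_⟩
  · -- disjointness of the V-tower
    have main : ∀ i₁ i₂, i₁ < n → i₂ < n → i₁ < i₂ →
        Disjoint (mnpow V i₁ '' F) (mnpow V i₂ '' F) := by
      intro i₁ i₂ h1 h2 hlt
      rw [Set.disjoint_left]
      rintro x ⟨y, hy, rfl⟩ ⟨z, hz, hzx⟩
      have hyz : y = V^[i₂ - i₁] z := by
        have h : V^[i₁] y = V^[i₁] (V^[i₂ - i₁] z) := by
          rw [← Function.iterate_add_apply, Nat.add_sub_cancel' hlt.le,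
            ← mnpow_apply, ← mnpow_apply, hzx]
        exact (mnpow V i₁).injective (by rw [mnpow_apply, mnpow_apply]; exact h)
      have hzU : z ∈ ⋃ m ∈ Finset.Ico 1 n, (mnpow V m) ⁻¹' E := by
        simp only [Set.mem_iUnion, exists_prop]
        refine ⟨i₂ - i₁, by rw [Finset.mem_Ico]; omega, ?_⟩
        show mnpow V (i₂ - i₁) z ∈ E
        rw [mnpow_apply, ← hyz]
        exact hFE hy
      exact hz.2 hzU
    intro i₁ i₂ h1 h2 hne
    rcases lt_or_gt_of_ne hne with h | h
    · exact main i₁ i₂ h1 h2 h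
    · exact (main i₂ i₁ h2 h1 h).symm
  · -- approximation
    intro i
    obtain ⟨I, hIlt, hIa⟩ := happrox i
    refine ⟨I, hIlt, ?_⟩
    have hcard : (I.card : ℝ) ≤ (n : ℝ) := by
      have : I ⊆ Finset.range n := fun l hl => Finset.mem_range.mpr (hIlt l hl)
      exact_mod_cast (Finset.card_le_card this).trans_eq (Finset.card_range n)
    have h1 : (μ ((⋃ l ∈ I, mnpow S l '' E) ∆ ⋃ l ∈ I, mnpow V l '' F)).toReal ≤
        ∑ l ∈ I, (μ ((mnpow S l '' E) ∆ (mnpow V l '' F))).toReal :=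
      (toReal_measure_mono (biUnion_symmDiff_subset I _ _)).trans
        (toReal_measure_biUnion_le μ _ _)
    have h2 : ∑ l ∈ I, (μ ((mnpow S l '' E) ∆ (mnpow V l '' F))).toReal ≤
        (I.card : ℝ) * (((n : ℝ) + 1) * b) := by
      rw [← nsmul_eq_mul]
      exact Finset.sum_le_card_nsmul I _ _ (fun l hl => (stepC l (hIlt l hl)).le)
    have h3 : (I.card : ℝ) * (((n : ℝ) + 1) * b) ≤ (n : ℝ) * (((n : ℝ) + 1) * b) := by
      apply mul_le_mul_of_nonneg_right hcard (by positivity)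
    have htri := toReal_symmDiff_triangle μ (A i) (⋃ l ∈ I, mnpow S l '' E)
      (⋃ l ∈ I, mnpow V l '' F)
    have hfinal : (n : ℝ) * (((n : ℝ) + 1) * b) < ε - a := by
      have h2n : 2 * (n : ℝ) ^ 2 * b = ε - a := by
        rw [hb]; field_simp
      nlinarith [hbpos]
    linarith
end

section
/- Let V and S be automorphisms of a probability space (X, μ), let n ≥ 2, let b > 0, and let E be a measurable set such that E, SE, …, S^{n−1}E are pairwise disjoint and μ(E ∩ VⁱE) < b for every i = 1, …, n−1 (which holds in particular whenever |μ(Vⁱ E ∩ E) − μ(Sⁱ E ∩ E)| < b for all i = 1, …, n−1). Define Ẽ = E ∖ (VE ∪ V²E ∪ … ∪ V^{n−1}E). Then the sets Ẽ, VẼ, …, V^{n−1}Ẽ are pairwise disjoint, and μ(E Δ Ẽ) < (n−1)·b. -/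
open MeasureTheory Filter Set
open scoped symmDiff

variable {X : Type*} [MeasurableSpace X]

lemma mnpow_coe (T : X ≃ᵐ X) (k : ℕ) : ⇑(mnpow T k) = T^[k] := by
  induction k with
  | zero => rfl
  | succ k ih =>
    have : ⇑(mnpow T (k + 1)) = ⇑T ∘ ⇑(mnpow T k) := rfl
    rw [this, ih, ← Function.iterate_succ']

/-- If `E, SE, …, S^{n-1}E` are pairwise disjoint and
`μ (E ∩ Vⁱ E) < b` for `i = 1, …, n-1`, then, setting
`Ẽ = E \ (VE ∪ V²E ∪ … ∪ V^{n-1}E)`, the sets `Ẽ, VẼ, …, V^{n-1}Ẽ` are pairwise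
disjoint and `μ (E Δ Ẽ) < (n-1) b`. -/
theorem trimmed_base_gives_tower
    {X : Type*} [MeasurableSpace X]
    (μ : Measure X) [IsProbabilityMeasure μ]
    (V S : X ≃ᵐ X) (hV : MeasurePreserving V μ μ) (hS : MeasurePreserving S μ μ)
    (n : ℕ) (hn : 2 ≤ n) (b : ℝ) (hb : 0 < b)
    (E : Set X) (hE : MeasurableSet E)
    (hSdisj : ∀ i j, i < n → j < n → i ≠ j → Disjoint (mnpow S i '' E) (mnpow S j '' E))
    (hsmall : ∀ i, 1 ≤ i → i ≤ n - 1 → (μ (E ∩ mnpow V i '' E)).toReal < b) :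
    (∀ i j, i < n → j < n → i ≠ j →
      Disjoint
        (mnpow V i '' (E \ ⋃ l ∈ Finset.Icc 1 (n - 1), mnpow V l '' E))
        (mnpow V j '' (E \ ⋃ l ∈ Finset.Icc 1 (n - 1), mnpow V l '' E))) ∧
    (μ (E ∆ (E \ ⋃ l ∈ Finset.Icc 1 (n - 1), mnpow V l '' E))).toReal
      < ((n : ℝ) - 1) * b := by
  set U : Set X := ⋃ l ∈ Finset.Icc 1 (n - 1), mnpow V l '' E with hU
  -- key disjointness for i < j
  have key : ∀ i j, i < j → j < n →
      Disjoint (mnpow V i '' (E \ U)) (mnpow V j '' (E \ U)) := by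
    intro i j hij hjn
    rw [Set.disjoint_left]
    rintro x ⟨a, ⟨haE, haU⟩, hax⟩ ⟨c, ⟨hcE, _⟩, hcx⟩
    apply haU
    have hdec : j = i + (j - i) := by omega
    have : V^[i] a = V^[i] (V^[j - i] c) := by
      rw [← Function.iterate_add_apply, ← hdec]
      rw [mnpow_coe] at hax hcx
      rw [hax, hcx]
    have hac : a = V^[j - i] c := Function.Injective.iterate V.injective i this
    have hmem : (j - i) ∈ Finset.Icc 1 (n - 1) := by
      rw [Finset.mem_Icc]; omega
    refine Set.mem_biUnion hmem ⟨c, hcE, ?_⟩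
    rw [mnpow_coe, ← hac]
  refine ⟨?_, ?_⟩
  · intro i j hi hj hij
    rcases lt_or_gt_of_ne hij with h | h
    · exact key i j h hj
    · exact (key j i h hi).symm
  · have hsymm : E ∆ (E \ U) = ⋃ l ∈ Finset.Icc 1 (n - 1), E ∩ mnpow V l '' E := by
      rw [← Set.inter_iUnion₂, ← hU]
      ext x
      simp only [Set.mem_symmDiff, Set.mem_diff, Set.mem_inter_iff]
      tauto
    rw [hsymm]
    have hne : (Finset.Icc 1 (n - 1)).Nonempty := by
      rw [Finset.nonempty_Icc]; omega
    calc (μ (⋃ l ∈ Finset.Icc 1 (n - 1), E ∩ mnpow V l '' E)).toReal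
        ≤ (∑ l ∈ Finset.Icc 1 (n - 1), μ (E ∩ mnpow V l '' E)).toReal := by
          apply ENNReal.toReal_mono
          · exact (ENNReal.sum_lt_top.mpr fun _ _ => measure_lt_top μ _).ne
          · exact measure_biUnion_finset_le _ _
      _ = ∑ l ∈ Finset.Icc 1 (n - 1), (μ (E ∩ mnpow V l '' E)).toReal :=
          ENNReal.toReal_sum fun _ _ => measure_ne_top μ _
      _ < ∑ l ∈ Finset.Icc 1 (n - 1), b := by
          apply Finset.sum_lt_sum_of_nonempty hne
          intro l hl
          rw [Finset.mem_Icc] at hl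
          exact hsmall l hl.1 hl.2
      _ = ((n : ℝ) - 1) * b := by
          rw [Finset.sum_const, Nat.card_Icc]
          have : n - 1 + 1 - 1 = n - 1 := by omega
          rw [this, nsmul_eq_mul, Nat.cast_sub (by omega)]
          norm_num
  done
end
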